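/- For all real x > 0, x^3 (coth(x) + x(1 - coth(x)^2)) - 6 (x coth(x) - 1)^2 > 0. -/

import Mathlib

noncomputable def coth (x : ℝ) : ℝ := Real.cosh x / Real.sinh x

lemma pos_of_deriv (f f' : ℝ → ℝ) (hf : ∀ y, HasDerivAt f (f' y) y) (h0 : f 0 = 0)
    (hpos : ∀ y, 0 < y → 0 < f' y) : ∀ y, 0 < y → 0 < f y := by
  intro x hx
  have mono : StrictMonoOn f (Set.Ici 0) := by
    apply strictMonoOn_of_deriv_pos (convex_Ici 0)
    · exact fun y _ => (hf y).continuousAt.continuousWithinAt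
    · intro y hy
      rw [interior_Ici] at hy
      rw [(hf y).deriv]
      exact hpos y hy
  have := mono Set.self_mem_Ici (Set.mem_Ici.2 hx.le) hx
  rwa [h0] at this

lemma k_pos : ∀ y, 0 < y → 0 < 2*y*Real.sinh y^2 + y - Real.sinh y*Real.cosh y := by
  apply pos_of_deriv _ (fun y => 4*y*Real.sinh y*Real.cosh y)
  · intro y
    have h := ((((hasDerivAt_id y).const_mul (2:ℝ)).mul ((Real.hasDerivAt_sinh y).pow 2)).add
      (hasDerivAt_id y)).sub ((Real.hasDerivAt_sinh y).mul (Real.hasDerivAt_cosh y))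
    refine h.congr_deriv (Eq.symm ?_)
    simp only [id_eq, Pi.pow_apply, Pi.mul_apply, Pi.sub_apply]; push_cast
    linear_combination Real.cosh_sq y
  · simp
  · intro y hy
    have h1 := Real.sinh_pos_iff.2 hy
    have h2 := Real.cosh_pos (x := y)
    positivity

lemma h3_pos : ∀ y, 0 < y →
    0 < 16*y^2*Real.sinh y*Real.cosh y + 12*Real.sinh y*Real.cosh y - 24*y*Real.sinh y^2 - 12*y := by
  apply pos_of_deriv _ (fun y => 16*y*(2*y*Real.sinh y^2 + y - Real.sinh y*Real.cosh y))
  · intro y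
    have hs := Real.hasDerivAt_sinh y
    have hc := Real.hasDerivAt_cosh y
    have h := ((((((hasDerivAt_pow 2 y).const_mul (16:ℝ)).mul hs).mul hc).add
        ((hs.const_mul (12:ℝ)).mul hc)).sub
        (((hasDerivAt_id y).const_mul (24:ℝ)).mul (hs.pow 2))).sub
        ((hasDerivAt_id y).const_mul (12:ℝ))
    refine h.congr_deriv (Eq.symm ?_)
    simp only [id_eq, Pi.pow_apply, Pi.mul_apply, Pi.sub_apply]; push_cast
    linear_combination (-(16*y^2)-12) * Real.cosh_sq y
  · simp
  · intro y hy
    have := k_pos y hy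
    have : (0:ℝ) < 16*y := by linarith
    nlinarith [k_pos y hy]

lemma h2_pos : ∀ y, 0 < y →
    0 < 8*y^2*Real.sinh y^2 + 4*y^2 + 16*Real.sinh y^2 - 20*y*Real.sinh y*Real.cosh y := by
  apply pos_of_deriv _ (fun y => 16*y^2*Real.sinh y*Real.cosh y + 12*Real.sinh y*Real.cosh y - 24*y*Real.sinh y^2 - 12*y)
  · intro y
    have hs := Real.hasDerivAt_sinh y
    have hc := Real.hasDerivAt_cosh y
    have h := (((((hasDerivAt_pow 2 y).const_mul (8:ℝ)).mul (hs.pow 2)).add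
        ((hasDerivAt_pow 2 y).const_mul (4:ℝ))).add
        ((hs.pow 2).const_mul (16:ℝ))).sub
        ((((hasDerivAt_id y).const_mul (20:ℝ)).mul hs).mul hc)
    refine h.congr_deriv (Eq.symm ?_)
    simp only [id_eq, Pi.pow_apply, Pi.mul_apply, Pi.sub_apply]; push_cast
    linear_combination (20*y) * Real.cosh_sq y
  · simp
  · exact h3_pos

lemma h1_pos : ∀ y, 0 < y →
    0 < 4*y^2*Real.sinh y*Real.cosh y + 15*Real.sinh y*Real.cosh y - 14*y*Real.sinh y^2 - 15*y := by
  apply pos_of_deriv _ (fun y => 8*y^2*Real.sinh y^2 + 4*y^2 + 16*Real.sinh y^2 - 20*y*Real.sinh y*Real.cosh y)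
  · intro y
    have hs := Real.hasDerivAt_sinh y
    have hc := Real.hasDerivAt_cosh y
    have h := ((((((hasDerivAt_pow 2 y).const_mul (4:ℝ)).mul hs).mul hc).add
        ((hs.const_mul (15:ℝ)).mul hc)).sub
        (((hasDerivAt_id y).const_mul (14:ℝ)).mul (hs.pow 2))).sub
        ((hasDerivAt_id y).const_mul (15:ℝ))
    refine h.congr_deriv (Eq.symm ?_)
    simp only [id_eq, Pi.pow_apply, Pi.mul_apply, Pi.sub_apply]; push_cast
    linear_combination (-(4*y^2)-15) * Real.cosh_sq y
  · simp
  · exact h2_pos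

lemma h_pos : ∀ y, 0 < y →
    0 < 2*y^2*Real.sinh y^2 + 12*Real.sinh y^2 - 9*y*Real.sinh y*Real.cosh y - 3*y^2 := by
  apply pos_of_deriv _ (fun y => 4*y^2*Real.sinh y*Real.cosh y + 15*Real.sinh y*Real.cosh y - 14*y*Real.sinh y^2 - 15*y)
  · intro y
    have hs := Real.hasDerivAt_sinh y
    have hc := Real.hasDerivAt_cosh y
    have h := (((((hasDerivAt_pow 2 y).const_mul (2:ℝ)).mul (hs.pow 2)).add
        ((hs.pow 2).const_mul (12:ℝ))).sub
        ((((hasDerivAt_id y).const_mul (9:ℝ)).mul hs).mul hc)).sub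
        ((hasDerivAt_pow 2 y).const_mul (3:ℝ))
    refine h.congr_deriv (Eq.symm ?_)
    simp only [id_eq, Pi.pow_apply, Pi.mul_apply, Pi.sub_apply]; push_cast
    linear_combination (9*y) * Real.cosh_sq y
  · simp
  · exact h1_pos

lemma g_pos : ∀ y, 0 < y →
    0 < y^3*(Real.sinh y*Real.cosh y - y) - 6*(y*Real.cosh y - Real.sinh y)^2 := by
  apply pos_of_deriv _
    (fun y => y*(2*y^2*Real.sinh y^2 + 12*Real.sinh y^2 - 9*y*Real.sinh y*Real.cosh y - 3*y^2))
  · intro y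
    have hs := Real.hasDerivAt_sinh y
    have hc := Real.hasDerivAt_cosh y
    have h := ((hasDerivAt_pow 3 y).mul ((hs.mul hc).sub (hasDerivAt_id y))).sub
        (((((hasDerivAt_id y).mul hc).sub hs).pow 2).const_mul (6:ℝ))
    refine h.congr_deriv (Eq.symm ?_)
    simp only [id_eq, Pi.pow_apply, Pi.mul_apply, Pi.sub_apply]; push_cast
    linear_combination (-(y^3)) * Real.cosh_sq y
  · simp
  · intro y hy
    nlinarith [h_pos y hy]

theorem stmt_1 (x : ℝ) (hx : 0 < x) :
    x ^ 3 * (coth x + x * (1 - (coth x) ^ 2)) - 6 * (x * coth x - 1) ^ 2 > 0 := by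
  have hs : 0 < Real.sinh x := Real.sinh_pos_iff.2 hx
  have hs' : Real.sinh x ≠ 0 := ne_of_gt hs
  have key : x ^ 3 * (coth x + x * (1 - (coth x) ^ 2)) - 6 * (x * coth x - 1) ^ 2
      = (x^3*(Real.sinh x*Real.cosh x - x) - 6*(x*Real.cosh x - Real.sinh x)^2) / (Real.sinh x)^2 := by
    unfold coth
    field_simp
    ring_nf
    linear_combination (-(x^4)) * Real.cosh_sq x
  rw [key]
  exact div_pos (g_pos x hx) (pow_pos hs 2)
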